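/- Assume α₂ > α₃ and A > B. Let μ₁ > z₀ be the unique solution of the reduced Dirichlet system with data A, and let μ₂ ≥ 0 satisfy erf(μ₂·√(α₁/α₂)) = H(μ₁). Then erf(μ₂·√(α₁/α₃)) < (k₃/k₂)·√(α₂/α₃)·((A−B)/(B−C))·erf(z₀·√(α₁/α₂)). -/

import Mathlib

noncomputable section
open MeasureTheory Set

/-- The error function `erf x = (2/√π) ∫₀ˣ exp(−s²) ds`. -/
def erf (x : ℝ) : ℝ := (2 / Real.sqrt Real.pi) * ∫ s in (0:ℝ)..x, Real.exp (-(s^2))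

/-- The complementary error function. -/
def erfc (x : ℝ) : ℝ := 1 - erf x


lemma gauss_integrable : Integrable (fun s : ℝ => Real.exp (-(s^2))) := by
  have := integrable_exp_neg_mul_sq (b := 1) one_pos
  simpa using this

lemma gauss_pos (s : ℝ) : 0 < Real.exp (-(s^2)) := Real.exp_pos _

lemma integral_Iic_gauss : ∫ s in Iic (0:ℝ), Real.exp (-(s^2)) = Real.sqrt Real.pi / 2 := by
  have h := integral_comp_neg_Iic (0:ℝ) (fun s => Real.exp (-(s^2)))
  simp only [neg_sq, neg_zero] at h
  rw [h]
  have := integral_gaussian_Ioi 1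
  simpa using this

lemma integral_Ioi_gauss : ∫ s in Ioi (0:ℝ), Real.exp (-(s^2)) = Real.sqrt Real.pi / 2 := by
  have := integral_gaussian_Ioi 1
  simpa using this

lemma erfc_eq (x : ℝ) :
    erfc x = (2 / Real.sqrt Real.pi) * ∫ s in Ioi x, Real.exp (-(s^2)) := by
  have hI : (∫ s in (0:ℝ)..x, Real.exp (-(s^2)))
      = (∫ s in Iic x, Real.exp (-(s^2))) - Real.sqrt Real.pi / 2 := by
    rw [← integral_Iic_gauss]
    exact (intervalIntegral.integral_Iic_sub_Iic gauss_integrable.integrableOn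
      gauss_integrable.integrableOn).symm
  have htot : (∫ s in Iic x, Real.exp (-(s^2))) + ∫ s in Ioi x, Real.exp (-(s^2))
      = Real.sqrt Real.pi := by
    rw [intervalIntegral.integral_Iic_add_Ioi gauss_integrable.integrableOn
      gauss_integrable.integrableOn]
    have := integral_gaussian 1
    simpa using this
  have hπ : Real.sqrt Real.pi ≠ 0 := by positivity
  have hIic : (∫ s in Iic x, Real.exp (-(s^2)))
      = Real.sqrt Real.pi - ∫ s in Ioi x, Real.exp (-(s^2)) := by linarith
  have h2 : (2 / Real.sqrt Real.pi) * (Real.sqrt Real.pi / 2) = 1 := by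
    have hπ : Real.sqrt Real.pi ≠ 0 := by positivity
    field_simp
  unfold erfc erf
  rw [hI, hIic]
  field_simp
  ring

lemma integral_Ioi_gauss_pos (x : ℝ) : 0 < ∫ s in Ioi x, Real.exp (-(s^2)) := by
  rw [setIntegral_pos_iff_support_of_nonneg_ae
    (Filter.Eventually.of_forall fun s => (gauss_pos s).le)
    gauss_integrable.integrableOn]
  have : Function.support (fun s : ℝ => Real.exp (-(s^2))) = Set.univ := by
    ext s; simp [Function.support, (gauss_pos s).ne']
  rw [this, Set.univ_inter]
  simp [Real.volume_Ioi]

lemma erfc_pos (x : ℝ) : 0 < erfc x := by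
  rw [erfc_eq]
  have := integral_Ioi_gauss_pos x
  positivity

lemma erf_lt_one (x : ℝ) : erf x < 1 := by
  have := erfc_pos x; unfold erfc at this; linarith

lemma erf_pos {x : ℝ} (hx : 0 < x) : 0 < erf x := by
  unfold erf
  have h : 0 < ∫ s in (0:ℝ)..x, Real.exp (-(s^2)) := by
    apply intervalIntegral.intervalIntegral_pos_of_pos_on
    · exact gauss_integrable.intervalIntegrable
    · exact fun s _ => gauss_pos s
    · exact hx
  positivity

lemma erf_nonneg {x : ℝ} (hx : 0 ≤ x) : 0 ≤ erf x := by
  rcases eq_or_lt_of_le hx with h | h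
  · simp [erf, ← h]
  · exact (erf_pos h).le

lemma integral_Ioi_shift (f : ℝ → ℝ) (a d : ℝ) :
    ∫ x in Ioi a, f (x + d) = ∫ x in Ioi (a + d), f x := by
  have A : MeasurableEmbedding fun x : ℝ => x + d :=
    (Homeomorph.addRight d).isClosedEmbedding.measurableEmbedding
  have h := A.setIntegral_map (μ := volume) f (Ioi (a + d))
  rw [map_add_right_eq_self volume d] at h
  rw [h]
  have : (fun x => x + d) ⁻¹' Ioi (a + d) = Ioi a := by
    rw [preimage_add_const_Ioi]; congr 1; ring
  rw [this]

lemma erfc_ratio {a b : ℝ} (hab : a ≤ b) :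
    erfc b ≤ erfc a * Real.exp (a^2 - b^2) := by
  rw [erfc_eq, erfc_eq]
  set d := b - a with hd
  have hd0 : 0 ≤ d := by simp [hd]; linarith
  have hshift : (∫ s in Ioi b, Real.exp (-(s^2)))
      = ∫ s in Ioi a, Real.exp (-((s + d)^2)) := by
    rw [integral_Ioi_shift (fun s => Real.exp (-(s^2))) a d]
    congr 1
    rw [hd]; ring
  have hint : IntegrableOn (fun s => Real.exp (-((s + d)^2))) (Ioi a) := by
    have : Integrable (fun s : ℝ => Real.exp (-((s + d)^2))) :=
      gauss_integrable.comp_add_right d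
    exact this.integrableOn
  have hint2 : IntegrableOn
      (fun s => (Real.exp (-(s^2))) * Real.exp (a^2 - b^2)) (Ioi a) :=
    (gauss_integrable.integrableOn).mul_const _
  have key : (∫ s in Ioi b, Real.exp (-(s^2)))
      ≤ (∫ s in Ioi a, Real.exp (-(s^2))) * Real.exp (a^2 - b^2) := by
    rw [hshift]
    calc (∫ s in Ioi a, Real.exp (-((s + d)^2)))
        ≤ ∫ s in Ioi a, (Real.exp (-(s^2))) * Real.exp (a^2 - b^2) := by
          apply setIntegral_mono_on hint hint2 measurableSet_Ioi
          intro s hs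
          rw [← Real.exp_add]
          apply Real.exp_le_exp.mpr
          have hs' : a < s := hs
          have hb2 : b^2 = (a + d)^2 := by rw [hd]; ring
          nlinarith [hb2, mul_nonneg hd0 (le_of_lt (sub_pos.mpr hs'))]
      _ = (∫ s in Ioi a, Real.exp (-(s^2))) * Real.exp (a^2 - b^2) := by
          rw [← integral_mul_const]
  rw [mul_assoc]
  exact mul_le_mul_of_nonneg_left key (by positivity)

/-- Physical data of the three-phase Stefan problem: positive thermal conductivities,
specific heats, mass density, latent heats, and temperatures `B > C > D`. -/
structure Params where
  k₁ : ℝ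
  k₂ : ℝ
  k₃ : ℝ
  c₁ : ℝ
  c₂ : ℝ
  c₃ : ℝ
  ρ : ℝ
  ℓ₁ : ℝ
  ℓ₂ : ℝ
  B : ℝ
  C : ℝ
  D : ℝ
  hk₁ : 0 < k₁
  hk₂ : 0 < k₂
  hk₃ : 0 < k₃
  hc₁ : 0 < c₁
  hc₂ : 0 < c₂
  hc₃ : 0 < c₃
  hρ : 0 < ρ
  hℓ₁ : 0 < ℓ₁
  hℓ₂ : 0 < ℓ₂
  hBC : C < B
  hCD : D < C

namespace Params

/-- Thermal diffusivity of phase 1. -/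
def α₁ (p : Params) : ℝ := p.k₁ / (p.ρ * p.c₁)

/-- Thermal diffusivity of phase 2. -/
def α₂ (p : Params) : ℝ := p.k₂ / (p.ρ * p.c₂)

/-- Thermal diffusivity of phase 3. -/
def α₃ (p : Params) : ℝ := p.k₃ / (p.ρ * p.c₃)

/-- Stefan number `Ste₁ = c₁(C−D)/ℓ₁`. -/
def Ste₁ (p : Params) : ℝ := p.c₁ * (p.C - p.D) / p.ℓ₁

/-- Stefan number `Ste₂ = c₂(B−C)/ℓ₂`. -/
def Ste₂ (p : Params) : ℝ := p.c₂ * (p.B - p.C) / p.ℓ₂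

/-- `φ(z) = z + (Ste₁/√π) exp(−z²)/erfc(z)`. -/
def φ (p : Params) (z : ℝ) : ℝ :=
  z + (p.Ste₁ / Real.sqrt Real.pi) * Real.exp (-(z^2)) / erfc z

/-- `H(z) = erf(z√(α₁/α₂)) − (Ste₂/√π)(ℓ₂/ℓ₁)√(k₂c₁/(k₁c₂)) exp(−z²α₁/α₂)/φ(z)`. -/
def H (p : Params) (z : ℝ) : ℝ :=
  erf (z * Real.sqrt (p.α₁ / p.α₂)) -
    (p.Ste₂ / Real.sqrt Real.pi) * (p.ℓ₂ / p.ℓ₁) *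
      Real.sqrt (p.k₂ * p.c₁ / (p.k₁ * p.c₂)) *
      (Real.exp (-(z^2) * (p.α₁ / p.α₂)) / p.φ z)

/-- `Q(z) = (ℓ₁/ℓ₂) φ(z) exp(z² α₁/α₂)`. -/
def Q (p : Params) (z : ℝ) : ℝ :=
  (p.ℓ₁ / p.ℓ₂) * p.φ z * Real.exp (z^2 * (p.α₁ / p.α₂))

/-- The function `T` arising from the Robin (convective) boundary condition with
heat-transfer coefficient `h₀` and bulk temperature `Ainf`. -/
def T (p : Params) (h₀ Ainf : ℝ) (z : ℝ) : ℝ :=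
  (p.Ste₂ / (Real.sqrt Real.pi * p.c₂)) * ((Ainf - p.B) / (p.B - p.C)) *
    Real.sqrt (p.k₃ * p.c₁ * p.c₃ / p.k₁) *
    (Real.exp (-(z^2) * p.α₁ * (1 / p.α₃ - 1 / p.α₂)) /
      (p.k₃ / (h₀ * Real.sqrt (Real.pi * p.α₃)) + erf (z * Real.sqrt (p.α₁ / p.α₃)))) -
  z * Real.exp (z^2 * (p.α₁ / p.α₂))

/-- The function `V` arising from the Dirichlet boundary condition with temperature `A`. -/
def V (p : Params) (A : ℝ) (z : ℝ) : ℝ :=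
  ((A - p.B) / p.ℓ₂) * Real.sqrt (p.c₁ * p.c₃ * p.k₃ / (Real.pi * p.k₁)) *
    (Real.exp (-(z^2) * (p.α₁ / p.α₃ - p.α₁ / p.α₂)) / erf (z * Real.sqrt (p.α₁ / p.α₃))) -
  z * Real.exp (z^2 * (p.α₁ / p.α₂))

/-- The function `P` arising from the Neumann boundary condition with flux coefficient `q₀`. -/
def P (p : Params) (q₀ : ℝ) (z : ℝ) : ℝ :=
  Real.exp (z^2 * (p.α₁ / p.α₂)) *
    (-z + (q₀ / p.ℓ₂) * Real.sqrt (p.c₁ / (p.ρ * p.k₁)) * Real.exp (-(z^2) * (p.α₁ / p.α₃)))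

/-- Critical heat-transfer coefficient `h₂`. -/
def h2 (p : Params) (Ainf z₀ : ℝ) : ℝ :=
  ((p.B - p.C) / (Ainf - p.B)) *
    Real.sqrt (p.k₂ * p.k₃ * p.c₂ / (Real.pi * p.c₃ * p.α₃)) *
    (1 / erf (z₀ * Real.sqrt (p.α₁ / p.α₂)))

/-- Critical heat-flux coefficient `q₂`. -/
def q2 (p : Params) (z₀ : ℝ) : ℝ :=
  p.k₂ * (p.B - p.C) / (Real.sqrt (p.α₂ * Real.pi) * erf (z₀ * Real.sqrt (p.α₁ / p.α₂)))

end Params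


lemma Params.Ste₁_pos (p : Params) : 0 < p.Ste₁ :=
  div_pos (mul_pos p.hc₁ (sub_pos.mpr p.hCD)) p.hℓ₁

lemma Params.phi_pos (p : Params) {z : ℝ} (hz : 0 < z) : 0 < p.φ z := by
  unfold Params.φ
  have h1 := p.Ste₁_pos
  have h2 := erfc_pos z
  have hπ := Real.sqrt_pos.mpr Real.pi_pos
  have : 0 < p.Ste₁ / Real.sqrt Real.pi * Real.exp (-(z^2)) / erfc z := by positivity
  linarith

lemma Params.phi_mono (p : Params) {a b : ℝ} (hab : a ≤ b) : p.φ a ≤ p.φ b := by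
  unfold Params.φ
  have h1 := p.Ste₁_pos
  have hπ := Real.sqrt_pos.mpr Real.pi_pos
  have hψ : Real.exp (-(a^2)) / erfc a ≤ Real.exp (-(b^2)) / erfc b := by
    rw [div_le_div_iff₀ (erfc_pos a) (erfc_pos b)]
    calc Real.exp (-(a^2)) * erfc b
        ≤ Real.exp (-(a^2)) * (erfc a * Real.exp (a^2 - b^2)) :=
          mul_le_mul_of_nonneg_left (erfc_ratio hab) (Real.exp_nonneg _)
      _ = Real.exp (-(b^2)) * erfc a := by
          rw [mul_comm (erfc a), ← mul_assoc, ← Real.exp_add]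
          ring_nf
  have hc : 0 ≤ p.Ste₁ / Real.sqrt Real.pi := by positivity
  have := mul_le_mul_of_nonneg_left hψ hc
  rw [← mul_div_assoc, ← mul_div_assoc] at this
  linarith


lemma sqrt_key (p : Params) : Real.sqrt (p.c₁ * p.c₃ * p.k₃ / (Real.pi * p.k₁)) *
    (Real.sqrt Real.pi * p.k₂) =
    p.k₃ * Real.sqrt (p.α₂ / p.α₃) * p.c₂ *
      Real.sqrt (p.k₂ * p.c₁ / (p.k₁ * p.c₂)) := by
  have hk₁ := p.hk₁; have hk₂ := p.hk₂; have hk₃ := p.hk₃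
  have hc₁ := p.hc₁; have hc₂ := p.hc₂; have hc₃ := p.hc₃
  have hρ := p.hρ; have hπ := Real.pi_pos
  have hα₂ : 0 < p.α₂ := div_pos p.hk₂ (mul_pos p.hρ p.hc₂)
  have hα₃ : 0 < p.α₃ := div_pos p.hk₃ (mul_pos p.hρ p.hc₃)
  have e1 : (0:ℝ) ≤ p.c₁ * p.c₃ * p.k₃ / (Real.pi * p.k₁) := by positivity
  have e2 : (0:ℝ) ≤ p.α₂ / p.α₃ := (div_pos hα₂ hα₃).le
  have e3 : (0:ℝ) ≤ p.k₂ * p.c₁ / (p.k₁ * p.c₂) := by positivity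
  have e4 : (0:ℝ) ≤ Real.pi := hπ.le
  have hL : (0:ℝ) ≤ Real.sqrt (p.c₁ * p.c₃ * p.k₃ / (Real.pi * p.k₁)) *
      (Real.sqrt Real.pi * p.k₂) := by positivity
  have hR : (0:ℝ) ≤ p.k₃ * Real.sqrt (p.α₂ / p.α₃) * p.c₂ *
      Real.sqrt (p.k₂ * p.c₁ / (p.k₁ * p.c₂)) := by positivity
  have hsq : (Real.sqrt (p.c₁ * p.c₃ * p.k₃ / (Real.pi * p.k₁)) *
      (Real.sqrt Real.pi * p.k₂))^2 =
      (p.k₃ * Real.sqrt (p.α₂ / p.α₃) * p.c₂ *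
        Real.sqrt (p.k₂ * p.c₁ / (p.k₁ * p.c₂)))^2 := by
    rw [mul_pow, mul_pow, mul_pow, mul_pow, mul_pow,
      Real.sq_sqrt e1, Real.sq_sqrt e2, Real.sq_sqrt e3, Real.sq_sqrt e4]
    unfold Params.α₂ Params.α₃
    field_simp
  calc Real.sqrt (p.c₁ * p.c₃ * p.k₃ / (Real.pi * p.k₁)) *
        (Real.sqrt Real.pi * p.k₂)
      = Real.sqrt ((Real.sqrt (p.c₁ * p.c₃ * p.k₃ / (Real.pi * p.k₁)) *
          (Real.sqrt Real.pi * p.k₂))^2) := (Real.sqrt_sq hL).symm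
    _ = Real.sqrt ((p.k₃ * Real.sqrt (p.α₂ / p.α₃) * p.c₂ *
          Real.sqrt (p.k₂ * p.c₁ / (p.k₁ * p.c₂)))^2) := by rw [hsq]
    _ = _ := Real.sqrt_sq hR

lemma dirichlet_id (p : Params) {A z₀ : ℝ} (hz₀pos : 0 < z₀) (hHz₀ : p.H z₀ = 0) :
    ((p.k₃ / p.k₂) * Real.sqrt (p.α₂ / p.α₃) * ((A - p.B) / (p.B - p.C)) *
      erf (z₀ * Real.sqrt (p.α₁ / p.α₂))) * p.Q z₀ =
    (A - p.B) / p.ℓ₂ * Real.sqrt (p.c₁ * p.c₃ * p.k₃ / (Real.pi * p.k₁)) := by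
  have herf0 : erf (z₀ * Real.sqrt (p.α₁ / p.α₂)) =
      (p.Ste₂ / Real.sqrt Real.pi) * (p.ℓ₂ / p.ℓ₁) *
        Real.sqrt (p.k₂ * p.c₁ / (p.k₁ * p.c₂)) *
        (Real.exp (-(z₀^2) * (p.α₁ / p.α₂)) / p.φ z₀) := by
    unfold Params.H at hHz₀; linarith
  have hφ : p.φ z₀ ≠ 0 := (p.phi_pos hz₀pos).ne'
  have hπ := Real.pi_pos
  have hSπ : Real.sqrt Real.pi ≠ 0 := (Real.sqrt_pos.mpr hπ).ne'
  have hexp : Real.exp (-(z₀^2) * (p.α₁ / p.α₂)) *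
      Real.exp (z₀^2 * (p.α₁ / p.α₂)) = 1 := by
    rw [← Real.exp_add, show -(z₀^2) * (p.α₁ / p.α₂) + z₀^2 * (p.α₁ / p.α₂) = 0 by ring,
      Real.exp_zero]
  have hφdiv : p.φ z₀ / p.φ z₀ = 1 := div_self hφ
  rw [herf0]
  unfold Params.Q
  calc ((p.k₃ / p.k₂) * Real.sqrt (p.α₂ / p.α₃) * ((A - p.B) / (p.B - p.C)) *
        ((p.Ste₂ / Real.sqrt Real.pi) * (p.ℓ₂ / p.ℓ₁) *
          Real.sqrt (p.k₂ * p.c₁ / (p.k₁ * p.c₂)) *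
          (Real.exp (-(z₀^2) * (p.α₁ / p.α₂)) / p.φ z₀))) *
        (p.ℓ₁ / p.ℓ₂ * p.φ z₀ * Real.exp (z₀^2 * (p.α₁ / p.α₂)))
      = ((p.k₃ / p.k₂) * Real.sqrt (p.α₂ / p.α₃) * ((A - p.B) / (p.B - p.C)) *
          (p.Ste₂ / Real.sqrt Real.pi) * (p.ℓ₂ / p.ℓ₁) *
          Real.sqrt (p.k₂ * p.c₁ / (p.k₁ * p.c₂)) * (p.ℓ₁ / p.ℓ₂)) *
          ((Real.exp (-(z₀^2) * (p.α₁ / p.α₂)) * Real.exp (z₀^2 * (p.α₁ / p.α₂))) *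
            (p.φ z₀ / p.φ z₀)) := by ring
    _ = (p.k₃ / p.k₂) * Real.sqrt (p.α₂ / p.α₃) * ((A - p.B) / (p.B - p.C)) *
          (p.Ste₂ / Real.sqrt Real.pi) * (p.ℓ₂ / p.ℓ₁) *
          Real.sqrt (p.k₂ * p.c₁ / (p.k₁ * p.c₂)) * (p.ℓ₁ / p.ℓ₂) := by
        rw [hexp, hφdiv, mul_one, mul_one]
    _ = (A - p.B) / p.ℓ₂ * Real.sqrt (p.c₁ * p.c₃ * p.k₃ / (Real.pi * p.k₁)) := by
        have hkey := sqrt_key p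
        unfold Params.Ste₂
        have hk₂ := p.hk₂.ne'
        have hℓ₁ := p.hℓ₁.ne'
        have hℓ₂ := p.hℓ₂.ne'
        have hBCne : p.B - p.C ≠ 0 := sub_ne_zero.mpr (ne_of_gt p.hBC)
        generalize Real.sqrt (p.k₂ * p.c₁ / (p.k₁ * p.c₂)) = S at hkey ⊢
        generalize Real.sqrt (p.c₁ * p.c₃ * p.k₃ / (Real.pi * p.k₁)) = R at hkey ⊢
        generalize Real.sqrt Real.pi = sp at hkey hSπ ⊢
        generalize Real.sqrt (p.α₂ / p.α₃) = s23 at hkey ⊢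
        have hR' : R = p.k₃ * s23 * p.c₂ * S / (sp * p.k₂) := by
          rw [eq_div_iff (mul_ne_zero hSπ hk₂)]; exact hkey
        rw [hR']
        field_simp

/-- bound on `erf(μ₂√(α₁/α₃))` for the Dirichlet solution. -/
theorem dirichlet_mu2_bound (p : Params) (A z₀ μ₁ μ₂ : ℝ)
    (hα : p.α₃ < p.α₂) (hA : p.B < A)
    (hz₀ : 0 < z₀ ∧ p.H z₀ = 0)
    (hμ₁ : z₀ < μ₁) (hμ₂ : 0 ≤ μ₂)
    (herf : erf (μ₂ * Real.sqrt (p.α₁ / p.α₂)) = p.H μ₁)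
    (hsys : p.Q μ₁ = p.V A μ₂) :
    erf (μ₂ * Real.sqrt (p.α₁ / p.α₃)) <
      (p.k₃ / p.k₂) * Real.sqrt (p.α₂ / p.α₃) * ((A - p.B) / (p.B - p.C)) *
        erf (z₀ * Real.sqrt (p.α₁ / p.α₂)) := by
  obtain ⟨hz₀pos, hHz₀⟩ := hz₀
  have hα₁ : 0 < p.α₁ := div_pos p.hk₁ (mul_pos p.hρ p.hc₁)
  have hα₂ : 0 < p.α₂ := div_pos p.hk₂ (mul_pos p.hρ p.hc₂)
  have hα₃ : 0 < p.α₃ := div_pos p.hk₃ (mul_pos p.hρ p.hc₃)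
  have hμ₁pos : 0 < μ₁ := hz₀pos.trans hμ₁
  have hQμpos : 0 < p.Q μ₁ := by
    unfold Params.Q
    have h1 := p.phi_pos hμ₁pos
    have h2 := p.hℓ₁
    have h3 := p.hℓ₂
    positivity
  have hQzpos : 0 < p.Q z₀ := by
    unfold Params.Q
    have h1 := p.phi_pos hz₀pos
    have h2 := p.hℓ₁
    have h3 := p.hℓ₂
    positivity
  -- μ₂ > 0
  have hμ₂pos : 0 < μ₂ := by
    rcases eq_or_lt_of_le hμ₂ with h | h
    · exfalso
      rw [← h] at hsys
      have herf0 : erf 0 = 0 := by simp [erf]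
      unfold Params.V at hsys
      rw [show (0:ℝ) * Real.sqrt (p.α₁ / p.α₃) = 0 by ring, herf0, div_zero,
        mul_zero, zero_mul, sub_zero] at hsys
      linarith [hQμpos]
    · exact h
  set E := erf (μ₂ * Real.sqrt (p.α₁ / p.α₃)) with hE
  have hEpos : 0 < E := erf_pos (mul_pos hμ₂pos (Real.sqrt_pos.mpr (div_pos hα₁ hα₃)))
  set cV := (A - p.B) / p.ℓ₂ * Real.sqrt (p.c₁ * p.c₃ * p.k₃ / (Real.pi * p.k₁)) with hcV
  set X := Real.exp (-(μ₂^2) * (p.α₁ / p.α₃ - p.α₁ / p.α₂)) with hX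
  have hXle : X ≤ 1 := by
    rw [hX]
    apply Real.exp_le_one_iff.mpr  -- check name
    have hrr : p.α₁ / p.α₂ ≤ p.α₁ / p.α₃ := by
      apply div_le_div_of_nonneg_left hα₁.le hα₃ hα.le
    nlinarith [sq_nonneg μ₂]
  -- main equation
  have hmain : (p.Q μ₁ + μ₂ * Real.exp (μ₂^2 * (p.α₁ / p.α₂))) * E = cV * X := by
    unfold Params.V at hsys
    rw [← hE, ← hcV, ← hX] at hsys
    have : p.Q μ₁ + μ₂ * Real.exp (μ₂^2 * (p.α₁ / p.α₂)) = cV * (X / E) := by linarith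
    rw [this, mul_assoc, div_mul_cancel₀ _ hEpos.ne']
  have hQmono : p.Q z₀ ≤ p.Q μ₁ := by
    unfold Params.Q
    have h1 := p.phi_pos hz₀pos
    have h2 : Real.exp (z₀^2 * (p.α₁ / p.α₂)) ≤ Real.exp (μ₁^2 * (p.α₁ / p.α₂)) := by
      apply Real.exp_le_exp.mpr
      have : z₀^2 ≤ μ₁^2 := by nlinarith
      have hr : 0 ≤ p.α₁ / p.α₂ := le_of_lt (div_pos hα₁ hα₂)
      nlinarith
    have h3 := p.phi_mono hμ₁.le
    have h4 := p.phi_pos hμ₁pos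
    have h5 : 0 < p.ℓ₁ / p.ℓ₂ := div_pos p.hℓ₁ p.hℓ₂
    have := mul_le_mul (mul_le_mul_of_nonneg_left h3 h5.le) h2
      (Real.exp_pos _).le (by positivity)
    nlinarith [this]
  -- E * Q z₀ < cV
  have hElt : E * p.Q z₀ < cV := by
    have h1 : 0 < μ₂ * Real.exp (μ₂^2 * (p.α₁ / p.α₂)) := by positivity
    have hcVpos : 0 < cV := by
      rw [hcV]
      have := p.hℓ₂; have := p.hk₁; have := p.hk₃; have := p.hc₁; have := p.hc₃
      have hAB : 0 < A - p.B := sub_pos.mpr hA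
      have hπ := Real.pi_pos
      positivity
    nlinarith
  -- the identity : RHS * Q z₀ = cV
  have hId : ((p.k₃ / p.k₂) * Real.sqrt (p.α₂ / p.α₃) * ((A - p.B) / (p.B - p.C)) *
      erf (z₀ * Real.sqrt (p.α₁ / p.α₂))) * p.Q z₀ = cV := by
    rw [hcV]; exact dirichlet_id p hz₀pos hHz₀
  have hfin : E * p.Q z₀ < ((p.k₃ / p.k₂) * Real.sqrt (p.α₂ / p.α₃) *
      ((A - p.B) / (p.B - p.C)) * erf (z₀ * Real.sqrt (p.α₁ / p.α₂))) * p.Q z₀ := by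
    rw [hId]; exact hElt
  exact lt_of_mul_lt_mul_right hfin hQzpos.le
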